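/- For the parameter sequences of linearized ASGARD with line search, for every k ≥ 0 one has τ_k ≤ 2/(k+2) and (β_0/(2 B_1)) τ_k² B_{k+1} ≤ β_{k+1} ≤ (1/2) ( 3 a (β_0/B_1) τ_k² L + √( (3 a (β_0/B_1) τ_k² L)² + 12 a (β_0/B_1) τ_k² m ) ). -/

import Mathlib

set_option maxHeartbeats 1000000


/-- parameter bounds for linearized ASGARD with line search:
`τ_k ≤ 2/(k+2)` and
`(β_0/(2B_1)) τ_k² B_{k+1} ≤ β_{k+1} ≤ (1/2)(3a(β_0/B_1)τ_k² L + √((3a(β_0/B_1)τ_k² L)² + 12a(β_0/B_1)τ_k² m))`. -/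
theorem stmt12 (a L m β0 : ℝ) (ha : 1 < a) (hL : 0 ≤ L) (hm : 0 < m) (hβ0 : 0 < β0)
    (B τ β : ℕ → ℝ)
    (hBpos : ∀ k : ℕ, 0 < B (k + 1)) (hBmono : ∀ k : ℕ, B (k + 1) ≤ B (k + 2))
    (hτ0 : τ 0 = 1) (hτmem : ∀ k, 1 ≤ k → τ k ∈ Set.Ioo (0 : ℝ) 1)
    (hrec : ∀ k : ℕ, (1 - τ (k + 1)) / (τ (k + 1) ^ 2 * B (k + 2)) = 1 / (τ k ^ 2 * B (k + 1)))
    (hβinit : β 0 = β0) (hβrec : ∀ k, β (k + 1) = β k / (1 + τ k))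
    (hls : ∀ k : ℕ, B (k + 1) ≤ a * (L + m / β (k + 1))) :
    ∀ k : ℕ, τ k ≤ 2 / ((k : ℝ) + 2) ∧
      β0 / (2 * B 1) * (τ k ^ 2 * B (k + 1)) ≤ β (k + 1) ∧
      β (k + 1) ≤ (1 / 2) * (3 * a * (β0 / B 1) * τ k ^ 2 * L +
        Real.sqrt ((3 * a * (β0 / B 1) * τ k ^ 2 * L) ^ 2
          + 12 * a * (β0 / B 1) * τ k ^ 2 * m)) := by
  have hτpos : ∀ k, 0 < τ k := by
    intro k
    cases k with
    | zero => rw [hτ0]; norm_num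
    | succ n => exact (hτmem (n+1) (by omega)).1
  have hτle1 : ∀ k, τ k ≤ 1 := by
    intro k
    cases k with
    | zero => rw [hτ0]
    | succ n => exact le_of_lt (hτmem (n+1) (by omega)).2
  have hcpos : ∀ k, 0 < τ k ^ 2 * B (k+1) := fun k =>
    mul_pos (pow_pos (hτpos k) 2) (hBpos k)
  have hβpos : ∀ k, 0 < β k := by
    intro k; induction k with
    | zero => rw [hβinit]; exact hβ0
    | succ n ih => rw [hβrec]; exact div_pos ih (by linarith [hτpos n])
  have hcrec : ∀ k, τ (k+1) ^ 2 * B (k+2) = (1 - τ (k+1)) * (τ k ^ 2 * B (k+1)) := by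
    intro k
    have h := hrec k
    have h1 := hcpos k
    have h2 := hcpos (k+1)
    have h2' : 0 < τ (k+1) ^ 2 * B (k+2) := hcpos (k+1)
    rw [div_eq_div_iff h2'.ne' h1.ne'] at h
    linarith
  -- τ bound
  have hτbd : ∀ k : ℕ, τ k * ((k : ℝ) + 2) ≤ 2 := by
    intro k
    induction k with
    | zero => rw [hτ0]; norm_num
    | succ n ih =>
      have h := hcrec n
      have hB := hBmono n
      have ht := hτpos (n+1)
      have ht1 := (hτmem (n+1) (by omega)).2
      have hs := hτpos n
      have hBp := hBpos n
      -- (1 - t) * s^2 ≥ t^2 where t = τ (n+1), s = τ n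
      have key : τ (n+1) ^ 2 ≤ (1 - τ (n+1)) * τ n ^ 2 := by
        have h2 : τ (n+1) ^ 2 * B (n+1) ≤ (1 - τ (n+1)) * (τ n ^ 2 * B (n+1)) := by
          calc τ (n+1) ^ 2 * B (n+1) ≤ τ (n+1) ^ 2 * B (n+2) := by
                exact mul_le_mul_of_nonneg_left hB (by positivity)
          _ = (1 - τ (n+1)) * (τ n ^ 2 * B (n+1)) := h
        nlinarith [hBpos n]
      push_cast
      nlinarith [sq_nonneg (τ (n+1) * ((n:ℝ)+2) - 2), sq_nonneg (τ n * ((n:ℝ)+2) - 2),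
        mul_pos hs (by positivity : (0:ℝ) < (n:ℝ)+1),
        (Nat.cast_nonneg n : (0:ℝ) ≤ n), mul_pos ht hs, sq_nonneg (τ n - τ (n+1))]
  -- product P
  set P : ℕ → ℝ := fun k => ∏ j ∈ Finset.range (k+1), (1 + τ j) with hP
  have hPpos : ∀ k, 0 < P k := by
    intro k
    apply Finset.prod_pos
    intro j _
    linarith [hτpos j]
  have hPsucc : ∀ k, P (k+1) = P k * (1 + τ (k+1)) := by
    intro k
    simp [hP, Finset.prod_range_succ]
  have hP0 : P 0 = 2 := by simp [hP, hτ0]; norm_num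
  have hβP : ∀ k, β (k+1) = β0 / P k := by
    intro k
    induction k with
    | zero => rw [hβrec, hβinit, hP0, hτ0]; norm_num
    | succ n ih =>
      rw [hβrec, ih, hPsucc]
      rw [div_div]
  -- upper bound on P k * c k
  have hup : ∀ k, P k * (τ k ^ 2 * B (k+1)) ≤ 2 * B 1 := by
    intro k
    induction k with
    | zero => rw [hP0, hτ0]; norm_num
    | succ n ih =>
      rw [hPsucc, hcrec]
      have ht := hτpos (n+1)
      have ht1 := (hτmem (n+1) (by omega)).2
      have := mul_pos (hPpos n) (hcpos n)
      nlinarith [sq_nonneg (τ (n+1))]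
  -- lower bound: B 1 * (k+3)(k+4) ≤ 3 * (P k * c k) * (k+1)(k+2)
  have hlow : ∀ k : ℕ, B 1 * (((k:ℝ)+3)*((k:ℝ)+4)) ≤
      3 * (P k * (τ k ^ 2 * B (k+1))) * (((k:ℝ)+1)*((k:ℝ)+2)) := by
    intro k
    induction k with
    | zero => rw [hP0, hτ0]; push_cast; nlinarith [hBpos 0]
    | succ n ih =>
      rw [hPsucc, hcrec]
      have ht := hτpos (n+1)
      have htb := hτbd (n+1)
      push_cast at htb ⊢
      have hQ := mul_pos (hPpos n) (hcpos n)
      have hB1 := hBpos 0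
      -- (1 - t^2)(n+3)^2 ≥ (n+1)(n+5)
      have h2 : (τ (n+1) * ((n:ℝ)+3))^2 ≤ 4 := by
        nlinarith [mul_pos ht (show (0:ℝ) < (n:ℝ)+3 by positivity)]
      have h1 : ((n:ℝ)+1)*((n:ℝ)+5) ≤ (1 - τ (n+1)^2) * ((n:ℝ)+3)^2 := by
        nlinarith [h2]
      nlinarith [mul_le_mul_of_nonneg_right ih (by positivity : (0:ℝ) ≤ (n:ℝ)+5),
        mul_le_mul_of_nonneg_left h1 (le_of_lt hQ),
        mul_pos hQ (by positivity : (0:ℝ) < ((n:ℝ)+3))]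
  have hB1 : 0 < B 1 := hBpos 0
  have ha0 : 0 < a := by linarith
  intro k
  refine ⟨?_, ?_, ?_⟩
  · rw [le_div_iff₀ (by positivity : (0:ℝ) < (k:ℝ)+2)]
    exact hτbd k
  · rw [hβP k, div_mul_eq_mul_div, div_le_div_iff₀ (by positivity) (hPpos k)]
    nlinarith [hup k, hβ0, mul_le_mul_of_nonneg_left (hup k) hβ0.le]
  · set x := β (k + 1) with hxdef
    set A := 3 * a * (β0 / B 1) * τ k ^ 2 * L with hA
    set C := 12 * a * (β0 / B 1) * τ k ^ 2 * m with hC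
    clear_value x A C
    have hxpos : 0 < x := hxdef ▸ hβpos (k+1)
    have hQpos : 0 < P k * (τ k ^ 2 * B (k+1)) := mul_pos (hPpos k) (hcpos k)
    have hQ3 : B 1 ≤ 3 * (P k * (τ k ^ 2 * B (k+1))) := by
      refine le_of_mul_le_mul_right ?_ (show (0:ℝ) < ((k:ℝ)+3)*((k:ℝ)+4) by positivity)
      calc B 1 * (((k:ℝ)+3)*((k:ℝ)+4))
          ≤ 3 * (P k * (τ k ^ 2 * B (k+1))) * (((k:ℝ)+1)*((k:ℝ)+2)) := hlow k
        _ ≤ 3 * (P k * (τ k ^ 2 * B (k+1))) * (((k:ℝ)+3)*((k:ℝ)+4)) := by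
            nlinarith [mul_nonneg hQpos.le (Nat.cast_nonneg k : (0:ℝ) ≤ (k:ℝ)), hQpos]
    have hx3 : x * B 1 ≤ 3 * β0 * (τ k ^ 2 * B (k+1)) := by
      rw [hxdef, hβP k, div_mul_eq_mul_div, div_le_iff₀ (hPpos k)]
      nlinarith [mul_le_mul_of_nonneg_left hQ3 hβ0.le]
    have h6 : B (k+1) * x ≤ a * L * x + a * m := by
      have h := mul_le_mul_of_nonneg_right (hls k) hxpos.le
      have he : a * (L + m / x) * x = a * L * x + a * m := by
        field_simp
      rw [← hxdef] at h
      linarith [he ▸ h]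
    have hkey : 4 * x ^ 2 ≤ 4 * A * x + C := by
      have e1 : A * B 1 = 3 * a * β0 * τ k ^ 2 * L := by
        rw [hA]; field_simp
      have e2 : C * B 1 = 12 * a * β0 * τ k ^ 2 * m := by
        rw [hC]; field_simp
      have h7 : x ^ 2 * B 1 ≤ 3 * β0 * τ k ^ 2 * (B (k+1) * x) := by
        nlinarith [mul_le_mul_of_nonneg_right hx3 hxpos.le]
      have h8 : x ^ 2 * B 1 ≤ A * x * B 1 + (C / 4) * B 1 := by
        have h9 : 3 * β0 * τ k ^ 2 * (B (k+1) * x) ≤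
            3 * β0 * τ k ^ 2 * (a * L * x + a * m) := by
          have : (0:ℝ) ≤ 3 * β0 * τ k ^ 2 := by positivity
          exact mul_le_mul_of_nonneg_left h6 this
        nlinarith [e1, e2]
      have := le_of_mul_le_mul_right (by nlinarith [h8] : (4 * x ^ 2) * B 1 ≤ (4 * A * x + C) * B 1) hB1
      linarith
    have hsq : (2 * x - A) ^ 2 ≤ A ^ 2 + C := by nlinarith [hkey]
    have hs : 2 * x - A ≤ Real.sqrt (A ^ 2 + C) := by
      calc 2 * x - A ≤ |2 * x - A| := le_abs_self _
        _ = Real.sqrt ((2 * x - A) ^ 2) := (Real.sqrt_sq_eq_abs _).symm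
        _ ≤ Real.sqrt (A ^ 2 + C) := Real.sqrt_le_sqrt hsq
    linarith
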